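/- arXiv:2011.11898 — 2 statements merged into one kernel-verified Lean document; each statement's English description precedes it below -/
import Mathlib

section
/- Smoothed approximation L¹ error: let Z be a real random variable whose distribution admits a density π on (−δ_0, δ_0) with π(x) ≤ C for x ∈ (−δ_0, δ_0), and let S_k(x) = 1/(1+e^{−kx}). Then E[|S_k(Z) − 𝟙{Z > 0}|] ≤ 2/(1 + e^{kδ_0}) + (2C/k)·ln(2/(1+e^{−kδ_0})). In particular E[|S_k(Z) − 𝟙{Z > 0}|] = O(1/k) as k → ∞. -/
open MeasureTheory

noncomputable def sigmoid (x k : ℝ) : ℝ := 1 / (1 + Real.exp (-(k * x)))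

variable {k δ₀ : ℝ}

lemma g_cont (k : ℝ) : Continuous (fun x : ℝ => 1 / (1 + Real.exp (k * |x|))) := by
  apply Continuous.div continuous_const
  · continuity
  · intro x; positivity

-- antiderivative on left piece
lemma deriv_left (hk : 0 < k) (x : ℝ) :
    HasDerivAt (fun x => (1/k) * Real.log (1 + Real.exp (k * x)))
      (1 / (1 + Real.exp (-(k * x)))) x := by
  have h1 : HasDerivAt (fun x : ℝ => k * x) k x := by
    simpa using (hasDerivAt_id x).const_mul k
  have h2 := (Real.hasDerivAt_exp (k*x)).comp x h1
  have h3 := (h2.const_add 1).log (by positivity : (0:ℝ) < 1 + Real.exp (k*x)).ne'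
  have h4 := h3.const_mul (1/k)
  refine h4.congr_deriv ?_
  symm
  simp only [Function.comp_apply]
  rw [Real.exp_neg]
  field_simp
  ring

lemma deriv_right (hk : 0 < k) (x : ℝ) :
    HasDerivAt (fun x => -(1/k) * Real.log (1 + Real.exp (-(k * x))))
      (1 / (1 + Real.exp (k * x))) x := by
  have h1 : HasDerivAt (fun x : ℝ => -(k * x)) (-k) x := by
    have := ((hasDerivAt_id x).const_mul k).neg
    simp only [mul_one] at this
    exact this
  have h2 := (Real.hasDerivAt_exp (-(k*x))).comp x h1
  have h3 := (h2.const_add 1).log (by positivity : (0:ℝ) < 1 + Real.exp (-(k*x))).ne'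
  have h4 := h3.const_mul (-(1/k))
  refine h4.congr_deriv ?_
  symm
  simp only [Function.comp_apply]
  rw [Real.exp_neg]
  have hek := Real.exp_pos (k*x)
  have h5 : Real.exp (k * x) * Real.exp (-(k*x)) = 1 := by rw [← Real.exp_add]; simp
  field_simp
  nlinarith

lemma J_val (hk : 0 < k) (hδ₀ : 0 < δ₀) :
    ∫ x in (-δ₀)..δ₀, 1 / (1 + Real.exp (k * |x|))
      = (2/k) * Real.log (2 / (1 + Real.exp (-(k * δ₀)))) := by
  have hint : ∀ a b : ℝ, IntervalIntegrable (fun x : ℝ => 1 / (1 + Real.exp (k * |x|)))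
      volume a b := fun a b => (g_cont k).intervalIntegrable a b
  rw [← intervalIntegral.integral_add_adjacent_intervals (hint (-δ₀) 0) (hint 0 δ₀)]
  have h1 : ∫ x in (-δ₀)..0, 1 / (1 + Real.exp (k * |x|))
      = ∫ x in (-δ₀)..0, 1 / (1 + Real.exp (-(k * x))) := by
    apply intervalIntegral.integral_congr
    intro x hx
    rw [Set.uIcc_of_le (by linarith)] at hx
    simp only [abs_of_nonpos hx.2]
    ring_nf
  have h2 : ∫ x in (0:ℝ)..δ₀, 1 / (1 + Real.exp (k * |x|))
      = ∫ x in (0:ℝ)..δ₀, 1 / (1 + Real.exp (k * x)) := by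
    apply intervalIntegral.integral_congr
    intro x hx
    rw [Set.uIcc_of_le (by linarith)] at hx
    simp only [abs_of_nonneg hx.1]
  rw [h1, h2]
  rw [intervalIntegral.integral_eq_sub_of_hasDerivAt (fun x _ => deriv_left hk x)
    (by apply Continuous.intervalIntegrable; apply Continuous.div continuous_const
        · continuity
        · intro x; positivity),
    intervalIntegral.integral_eq_sub_of_hasDerivAt (fun x _ => deriv_right hk x)
    (by apply Continuous.intervalIntegrable; apply Continuous.div continuous_const
        · continuity
        · intro x; positivity)]
  have hpos : (0:ℝ) < 1 + Real.exp (-(k*δ₀)) := by positivity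
  rw [Real.log_div two_ne_zero hpos.ne']
  simp [Real.exp_zero]
  ring_nf

lemma abs_sigmoid_eq (k x : ℝ) :
    |sigmoid x k - (if x > 0 then (1:ℝ) else 0)| = 1 / (1 + Real.exp (k * |x|)) := by
  unfold sigmoid
  have he : (0:ℝ) < Real.exp (-(k*x)) := Real.exp_pos _
  split_ifs with h
  · rw [abs_of_nonpos (by
      have : 1 / (1 + Real.exp (-(k*x))) ≤ 1 := by
        rw [div_le_one (by linarith)]; linarith
      linarith)]
    rw [abs_of_pos h]
    have h2 : Real.exp (k * x) * Real.exp (-(k*x)) = 1 := by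
      rw [← Real.exp_add]; simp
    field_simp
    nlinarith [Real.exp_pos (k*x)]
  · push_neg at h
    rw [abs_of_nonpos h, sub_zero, abs_of_nonneg (by positivity)]
    ring_nf

theorem smoothed_L1_error
    {Ω : Type*} [MeasurableSpace Ω] (μ : Measure Ω) [IsProbabilityMeasure μ]
    (Z : Ω → ℝ) (π : ℝ → ℝ) (C δ₀ k : ℝ)
    (hZ : Measurable Z) (hδ₀ : 0 < δ₀) (hk : 0 < k) (hC : 0 ≤ C)
    (hπnn : ∀ x, 0 ≤ π x)
    (hdens : ∀ s : Set ℝ, MeasurableSet s → s ⊆ Set.Ioo (-δ₀) δ₀ →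
      Measure.map Z μ s = ∫⁻ x in s, ENNReal.ofReal (π x))
    (hπbd : ∀ x ∈ Set.Ioo (-δ₀) δ₀, π x ≤ C) :
    ∫ ω, |sigmoid (Z ω) k - (if Z ω > 0 then (1:ℝ) else 0)| ∂μ
      ≤ 2 / (1 + Real.exp (k * δ₀))
        + (2 * C / k) * Real.log (2 / (1 + Real.exp (-(k * δ₀)))) := by
  set g : ℝ → ℝ := fun x => 1 / (1 + Real.exp (k * |x|)) with hg
  have hgc : Continuous g := g_cont k
  have hgnn : ∀ x, 0 ≤ g x := fun x => by positivity
  have hgle : ∀ x, g x ≤ 1 := fun x => by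
    rw [hg]; simp only
    rw [div_le_one (by positivity)]
    nlinarith [Real.exp_pos (k * |x|)]
  set ν : Measure ℝ := Measure.map Z μ with hν
  have : IsProbabilityMeasure ν := Measure.isProbabilityMeasure_map hZ.aemeasurable
  set A : Set ℝ := Set.Ioo (-δ₀) δ₀ with hA
  have hAm : MeasurableSet A := measurableSet_Ioo
  -- step 1: rewrite integrand
  have step1 : ∫ ω, |sigmoid (Z ω) k - (if Z ω > 0 then (1:ℝ) else 0)| ∂μ
      = ∫ x, g x ∂ν := by
    rw [hν, integral_map hZ.aemeasurable hgc.aestronglyMeasurable]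
    congr 1; ext ω; exact abs_sigmoid_eq k (Z ω)
  rw [step1]
  -- integrability of g wrt ν
  have hgi : Integrable g ν := by
    apply Integrable.mono' (integrable_const (1:ℝ)) hgc.aestronglyMeasurable
    filter_upwards with x
    rw [Real.norm_eq_abs, abs_of_nonneg (hgnn x)]
    exact hgle x
  -- split
  rw [← integral_add_compl hAm hgi]
  -- tail bound
  have tail : ∫ x in Aᶜ, g x ∂ν ≤ 1 / (1 + Real.exp (k * δ₀)) := by
    calc ∫ x in Aᶜ, g x ∂ν ≤ ∫ _ in Aᶜ, 1 / (1 + Real.exp (k * δ₀)) ∂ν := by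
          apply setIntegral_mono_on hgi.integrableOn (integrableOn_const (measure_lt_top _ _).ne) hAm.compl
          intro x hx
          simp only [hA, Set.mem_compl_iff, Set.mem_Ioo, not_and_or, not_lt] at hx
          have hx' : δ₀ ≤ |x| := by
            rcases hx with h | h
            · rw [abs_of_nonpos (by linarith)]; linarith
            · rw [abs_of_nonneg (by linarith)]; exact h
          rw [hg]; simp only
          apply div_le_div_of_nonneg_left one_pos.le (by positivity)
          gcongr
      _ ≤ 1 / (1 + Real.exp (k * δ₀)) := by
          rw [setIntegral_const, smul_eq_mul, one_div]
          have h1 : (ν Aᶜ).toReal ≤ 1 :=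
            ENNReal.toReal_le_of_le_ofReal zero_le_one (by simpa using (prob_le_one (μ := ν) (s := Aᶜ)))
          exact mul_le_of_le_one_left (by positivity) h1
  -- measure comparison on A
  have hmle : ν.restrict A ≤ (ENNReal.ofReal C) • (volume.restrict A) := by
    refine Measure.le_iff.2 (fun s hs => ?_)
    rw [Measure.restrict_apply hs, Measure.smul_apply, Measure.restrict_apply hs,
      hdens _ (hs.inter hAm) Set.inter_subset_right, smul_eq_mul]
    calc ∫⁻ x in s ∩ A, ENNReal.ofReal (π x)
        ≤ ∫⁻ _ in s ∩ A, ENNReal.ofReal C := by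
          apply setLIntegral_mono measurable_const
          intro x hx
          exact ENNReal.ofReal_le_ofReal (hπbd x hx.2)
      _ = ENNReal.ofReal C * volume (s ∩ A) := by
          rw [setLIntegral_const]
  -- integrability of g on A wrt volume
  have hgiA : IntegrableOn g A volume := by
    apply Integrable.mono' (integrableOn_const (C := (1:ℝ)) (s := A) (μ := volume) (by
      rw [hA]; exact measure_Ioo_lt_top.ne))
      hgc.aestronglyMeasurable.restrict
    filter_upwards with x
    rw [Real.norm_eq_abs, abs_of_nonneg (hgnn x)]
    exact hgle x
  -- value of the Lebesgue integral of g on A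
  have hJnn : 0 ≤ ∫ x in A, g x := setIntegral_nonneg hAm (fun x _ => hgnn x)
  have hJ : ∫ x in A, g x = (2/k) * Real.log (2 / (1 + Real.exp (-(k * δ₀)))) := by
    rw [hA, ← MeasureTheory.integral_Ioc_eq_integral_Ioo,
      ← intervalIntegral.integral_of_le (by linarith)]
    exact J_val hk hδ₀
  have hLnn : 0 ≤ Real.log (2 / (1 + Real.exp (-(k * δ₀)))) := by
    nlinarith [hJnn, hJ, div_pos (by norm_num : (0:ℝ) < 2) hk]
  -- main bound
  have main : ∫ x in A, g x ∂ν ≤ C * ∫ x in A, g x := by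
    rw [integral_eq_lintegral_of_nonneg_ae (Filter.Eventually.of_forall hgnn)
      hgc.aestronglyMeasurable.restrict]
    have e2 : ∫⁻ x in A, ENNReal.ofReal (g x) ∂ν
        ≤ ENNReal.ofReal C * ∫⁻ x in A, ENNReal.ofReal (g x) := by
      calc ∫⁻ x in A, ENNReal.ofReal (g x) ∂ν
          ≤ ∫⁻ x, ENNReal.ofReal (g x) ∂((ENNReal.ofReal C) • (volume.restrict A)) :=
            lintegral_mono' hmle le_rfl
        _ = ENNReal.ofReal C * ∫⁻ x in A, ENNReal.ofReal (g x) := by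
            rw [lintegral_smul_measure, smul_eq_mul]
    have e3 : ∫⁻ x in A, ENNReal.ofReal (g x) = ENNReal.ofReal (∫ x in A, g x) :=
      (ofReal_integral_eq_lintegral_ofReal hgiA (Filter.Eventually.of_forall hgnn)).symm
    rw [e3] at e2
    calc (∫⁻ x in A, ENNReal.ofReal (g x) ∂ν).toReal
        ≤ (ENNReal.ofReal C * ENNReal.ofReal (∫ x in A, g x)).toReal := by
          apply ENNReal.toReal_mono _ e2
          exact ENNReal.mul_ne_top ENNReal.ofReal_ne_top ENNReal.ofReal_ne_top
      _ = C * ∫ x in A, g x := by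
          rw [ENNReal.toReal_mul, ENNReal.toReal_ofReal hC, ENNReal.toReal_ofReal hJnn]
  -- conclude
  have hc : 0 < 1 / (1 + Real.exp (k * δ₀)) := by positivity
  rw [hJ] at main
  have : (2 : ℝ) / (1 + Real.exp (k * δ₀)) = 2 * (1 / (1 + Real.exp (k * δ₀))) := by ring
  rw [this]
  have heq : C * (2 / k * Real.log (2 / (1 + Real.exp (-(k * δ₀)))))
      = 2 * C / k * Real.log (2 / (1 + Real.exp (-(k * δ₀)))) := by ring
  linarith [tail, main]
end

section
/- Smoothed approximation L² error: under the same assumptions as the L¹ bound (density of Z bounded by C on (−δ_0, δ_0)), E[(S_k(Z) − 𝟙{Z > 0})²] ≤ 2/(1 + e^{kδ_0})² + (2C/k)·[ln(2/(1+e^{−kδ_0})) + 1/2 − 1/(1+e^{−kδ_0})]. In particular E[(S_k(Z) − 𝟙{Z > 0})²] = O(1/k) as k → ∞. -/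
open MeasureTheory

lemma one_add_exp_pos (a : ℝ) : 0 < 1 + Real.exp a := by positivity

lemma sq_err_eq (k x : ℝ) :
    (sigmoid x k - (if x > 0 then (1:ℝ) else 0)) ^ 2
      = (1 / (1 + Real.exp (k * |x|))) ^ 2 := by
  unfold sigmoid
  by_cases h : x > 0
  · rw [if_pos h, abs_of_pos h]
    have h1 : Real.exp (-(k*x)) * Real.exp (k*x) = 1 := by
      rw [← Real.exp_add]; simp
    have h2 := (one_add_exp_pos (-(k*x))).ne'
    have h3 := (one_add_exp_pos (k*x)).ne'
    field_simp
    ring_nf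
    have e1 : Real.exp (-(k*x))^2 * Real.exp (k*x)^2 = 1 := by
      rw [← mul_pow, h1, one_pow]
    have e2 : Real.exp (-(k*x))^2 * Real.exp (k*x) = Real.exp (-(k*x)) := by
      rw [sq, mul_assoc, h1, mul_one]
    linarith
  · rw [if_neg h, abs_of_nonpos (le_of_not_gt h)]
    rw [show k * -x = -(k*x) by ring]
    ring

lemma hasDerivAt_F (k : ℝ) (hk : 0 < k) (x : ℝ) :
    HasDerivAt (fun y => y - (1/k) * Real.log (1 + Real.exp (k*y))
        + (1/k) * (1 / (1 + Real.exp (k*y))))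
      ((1 / (1 + Real.exp (k*x))) ^ 2) x := by
  have hpos : 0 < 1 + Real.exp (k*x) := one_add_exp_pos _
  have h1 : HasDerivAt (fun y : ℝ => 1 + Real.exp (k*y)) (k * Real.exp (k*x)) x := by
    have := (Real.hasDerivAt_exp (k*x)).comp x ((hasDerivAt_id x).const_mul k)
    simpa [mul_comm] using (this.const_add 1)
  have h2 : HasDerivAt (fun y => Real.log (1 + Real.exp (k*y)))
      (k * Real.exp (k*x) / (1 + Real.exp (k*x))) x := h1.log hpos.ne'
  have h3 : HasDerivAt (fun y => 1 / (1 + Real.exp (k*y)))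
      (-(k * Real.exp (k*x)) / (1 + Real.exp (k*x))^2) x := by
    have h := h1.inv hpos.ne'
    simp only [one_div]
    exact h
  have h4 := ((hasDerivAt_id x).sub (h2.const_mul (1/k))).add (h3.const_mul (1/k))
  refine h4.congr_deriv ?_
  have hpos2 : (1 + Real.exp (k*x))^2 ≠ 0 := by positivity
  field_simp
  ring

lemma integral_eval (k δ₀ : ℝ) (hk : 0 < k) (hδ₀ : 0 < δ₀) :
    ∫ x in (0:ℝ)..δ₀, (1/(1+Real.exp (k*x)))^2
      = (1/k) * (Real.log (2/(1+Real.exp (-(k*δ₀)))) + 1/2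
          - 1/(1+Real.exp (-(k*δ₀)))) := by
  have hcont : Continuous fun x : ℝ => (1/(1+Real.exp (k*x)))^2 := by
    apply Continuous.pow
    exact continuous_const.div (by continuity) (fun x => (one_add_exp_pos (k*x)).ne')
  have hftc := intervalIntegral.integral_eq_sub_of_hasDerivAt
    (f := fun y => y - (1/k) * Real.log (1 + Real.exp (k*y))
        + (1/k) * (1 / (1 + Real.exp (k*y))))
    (fun x _ => hasDerivAt_F k hk x) (hcont.intervalIntegrable 0 δ₀)
  rw [hftc]
  have ha : Real.exp (k*δ₀) * Real.exp (-(k*δ₀)) = 1 := by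
    rw [← Real.exp_add]; simp
  have hp1 : (0:ℝ) < 1 + Real.exp (k*δ₀) := one_add_exp_pos _
  have hp2 : (0:ℝ) < 1 + Real.exp (-(k*δ₀)) := one_add_exp_pos _
  have hlog1 : Real.log (1 + Real.exp (k*δ₀))
      = k*δ₀ + Real.log (1 + Real.exp (-(k*δ₀))) := by
    have : 1 + Real.exp (k*δ₀) = Real.exp (k*δ₀) * (1 + Real.exp (-(k*δ₀))) := by
      rw [mul_add, mul_one, ha]; ring
    rw [this, Real.log_mul (Real.exp_pos _).ne' hp2.ne', Real.log_exp]
  have hlog2 : Real.log (2/(1+Real.exp (-(k*δ₀))))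
      = Real.log 2 - Real.log (1 + Real.exp (-(k*δ₀))) := by
    rw [Real.log_div (by norm_num) hp2.ne']
  have hinv : 1/(1 + Real.exp (k*δ₀)) = 1 - 1/(1 + Real.exp (-(k*δ₀))) := by
    field_simp
    linarith [ha]
  simp only [mul_zero, Real.exp_zero]
  rw [hlog2, hinv, hlog1]
  have h2 : Real.log (1 + 1) = Real.log 2 := by norm_num
  rw [h2]
  field_simp
  ring

lemma h_cont (k : ℝ) : Continuous fun x : ℝ => (1/(1+Real.exp (k*|x|)))^2 := by
  apply Continuous.pow
  exact continuous_const.div (by continuity) (fun x => (one_add_exp_pos (k*|x|)).ne')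

lemma sym_integral (k δ₀ : ℝ) (hk : 0 < k) (hδ₀ : 0 < δ₀) :
    ∫ x in Set.Ioo (-δ₀) δ₀, (1/(1+Real.exp (k*|x|)))^2
      = 2 * ∫ x in (0:ℝ)..δ₀, (1/(1+Real.exp (k*x)))^2 := by
  set h : ℝ → ℝ := fun x => (1/(1+Real.exp (k*|x|)))^2 with hh
  have hc := h_cont k
  have hIoo : ∫ x in Set.Ioo (-δ₀) δ₀, h x = ∫ x in (-δ₀)..δ₀, h x := by
    rw [intervalIntegral.integral_of_le (by linarith), integral_Ioc_eq_integral_Ioo]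
  rw [hIoo]
  have hsplit : (∫ x in (-δ₀)..(0:ℝ), h x) + ∫ x in (0:ℝ)..δ₀, h x
      = ∫ x in (-δ₀)..δ₀, h x :=
    intervalIntegral.integral_add_adjacent_intervals (a := -δ₀) (b := 0) (c := δ₀) (μ := volume)
      (f := h) (hc.intervalIntegrable _ _) (hc.intervalIntegrable _ _)
  have hneg : ∫ x in (-δ₀)..(0:ℝ), h x = ∫ x in (0:ℝ)..δ₀, h x := by
    have := intervalIntegral.integral_comp_neg (a := (0:ℝ)) (b := δ₀) h
    simp only [neg_zero] at this
    rw [← this]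
    apply intervalIntegral.integral_congr
    intro x _
    simp [hh, abs_neg]
  have hright : ∫ x in (0:ℝ)..δ₀, h x = ∫ x in (0:ℝ)..δ₀, (1/(1+Real.exp (k*x)))^2 := by
    apply intervalIntegral.integral_congr
    intro x hx
    rw [Set.uIcc_of_le (by linarith)] at hx
    simp [hh, abs_of_nonneg hx.1]
  rw [← hsplit, hneg, hright]
  ring

theorem smoothed_L2_error
    {Ω : Type*} [MeasurableSpace Ω] (μ : Measure Ω) [IsProbabilityMeasure μ]
    (Z : Ω → ℝ) (π : ℝ → ℝ) (C δ₀ k : ℝ)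
    (hZ : Measurable Z) (hδ₀ : 0 < δ₀) (hk : 0 < k) (hC : 0 ≤ C)
    (hπnn : ∀ x, 0 ≤ π x)
    (hdens : ∀ s : Set ℝ, MeasurableSet s → s ⊆ Set.Ioo (-δ₀) δ₀ →
      Measure.map Z μ s = ∫⁻ x in s, ENNReal.ofReal (π x))
    (hπbd : ∀ x ∈ Set.Ioo (-δ₀) δ₀, π x ≤ C) :
    ∫ ω, (sigmoid (Z ω) k - (if Z ω > 0 then (1:ℝ) else 0)) ^ 2 ∂μ
      ≤ 2 / (1 + Real.exp (k * δ₀)) ^ 2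
        + (2 * C / k) * (Real.log (2 / (1 + Real.exp (-(k * δ₀)))) + 1 / 2
            - 1 / (1 + Real.exp (-(k * δ₀)))) := by
  set g : ℝ → ℝ := fun x => (1/(1+Real.exp (k*|x|)))^2 with hg
  have hgc : Continuous g := h_cont k
  have hg0 : ∀ x, 0 ≤ g x := fun x => by positivity
  have hg1 : ∀ x, g x ≤ 1 := by
    intro x
    have h1 : (1:ℝ) ≤ 1 + Real.exp (k*|x|) := le_add_of_nonneg_right (Real.exp_pos _).le
    have h2 : 1/(1+Real.exp (k*|x|)) ≤ 1 := by
      rw [div_le_one (by positivity)]; exact h1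
    have h3 : 0 ≤ 1/(1+Real.exp (k*|x|)) := by positivity
    calc g x = (1/(1+Real.exp (k*|x|)))^2 := rfl
      _ ≤ 1^2 := by gcongr
      _ = 1 := one_pow 2
  set ν : Measure ℝ := Measure.map Z μ with hν
  haveI : IsProbabilityMeasure ν := Measure.isProbabilityMeasure_map hZ.aemeasurable
  set A : Set ℝ := Set.Ioo (-δ₀) δ₀ with hAdef
  have hA : MeasurableSet A := measurableSet_Ioo
  -- rewrite integrand
  have hrw : ∫ ω, (sigmoid (Z ω) k - (if Z ω > 0 then (1:ℝ) else 0)) ^ 2 ∂μ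
      = ∫ x, g x ∂ν := by
    simp_rw [sq_err_eq k]
    exact (integral_map hZ.aemeasurable hgc.aestronglyMeasurable).symm
  rw [hrw]
  have hint : Integrable g ν := by
    apply Integrable.mono' (integrable_const (1:ℝ)) hgc.aestronglyMeasurable
    filter_upwards with x
    rw [Real.norm_eq_abs, abs_of_nonneg (hg0 x)]
    exact hg1 x
  rw [← integral_add_compl hA hint]
  -- bound on complement
  set c : ℝ := (1/(1+Real.exp (k*δ₀)))^2 with hc
  have hcompl : ∫ x in Aᶜ, g x ∂ν ≤ 2 / (1 + Real.exp (k * δ₀)) ^ 2 := by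
    have hbd : ∀ x ∈ Aᶜ, g x ≤ c := by
      intro x hx
      have habs : δ₀ ≤ |x| := by
        rcases not_and_or.1 (fun h => hx ⟨h.1, h.2⟩ : ¬(-δ₀ < x ∧ x < δ₀)) with h | h
        · push_neg at h; calc δ₀ ≤ -x := by linarith
            _ ≤ |x| := neg_le_abs x
        · push_neg at h; exact h.trans (le_abs_self x)
      have : Real.exp (k*δ₀) ≤ Real.exp (k*|x|) := by
        apply Real.exp_le_exp.2; exact mul_le_mul_of_nonneg_left habs hk.le
      have h2 : 1/(1+Real.exp (k*|x|)) ≤ 1/(1+Real.exp (k*δ₀)) := by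
        apply div_le_div_of_nonneg_left (by norm_num) (by positivity) (by linarith)
      calc g x = (1/(1+Real.exp (k*|x|)))^2 := rfl
        _ ≤ (1/(1+Real.exp (k*δ₀)))^2 := by gcongr
    have h1 : ∫ x in Aᶜ, g x ∂ν ≤ ∫ _ in Aᶜ, c ∂ν :=
      setIntegral_mono_on hint.integrableOn (integrableOn_const (measure_lt_top _ _).ne)
        hA.compl hbd
    have h2 : ∫ _ in Aᶜ, c ∂ν = (ν Aᶜ).toReal * c := by
      rw [setIntegral_const, smul_eq_mul]; rfl
    have h3 : (ν Aᶜ).toReal ≤ 1 := by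
      have := prob_le_one (μ := ν) (s := Aᶜ)
      simpa using ENNReal.toReal_mono (by norm_num) this
    have hc0 : 0 ≤ c := by positivity
    have h4 : c = 1 / (1 + Real.exp (k * δ₀)) ^ 2 := by
      rw [hc, div_pow, one_pow]
    calc ∫ x in Aᶜ, g x ∂ν ≤ (ν Aᶜ).toReal * c := h1.trans_eq h2
      _ ≤ 1 * c := by gcongr
      _ = 1 / (1 + Real.exp (k * δ₀)) ^ 2 := by rw [one_mul, h4]
      _ ≤ 2 / (1 + Real.exp (k * δ₀)) ^ 2 := by gcongr; norm_num
  -- bound on A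
  have hIA_vol : IntegrableOn g A volume :=
    (hgc.integrableOn_Icc (a := -δ₀) (b := δ₀)).mono_set Set.Ioo_subset_Icc_self
  have hInonneg : 0 ≤ ∫ x in A, g x ∂volume := setIntegral_nonneg hA fun x _ => hg0 x
  have hkey : ∀ s : Set ℝ, MeasurableSet s → s ⊆ A → ν s ≤ ENNReal.ofReal C * volume s := by
    intro s hs hsA
    rw [hν, hdens s hs hsA]
    calc ∫⁻ x in s, ENNReal.ofReal (π x)
        ≤ ∫⁻ _ in s, ENNReal.ofReal C := by
          apply setLIntegral_mono measurable_const
          exact fun x hx => ENNReal.ofReal_le_ofReal (hπbd x (hsA hx))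
      _ = ENNReal.ofReal C * volume s := by rw [setLIntegral_const]
  have hrle : ν.restrict A ≤ (ENNReal.ofReal C) • volume.restrict A := by
    refine Measure.le_iff.2 fun t ht => ?_
    rw [Measure.restrict_apply ht, Measure.smul_apply, smul_eq_mul,
      Measure.restrict_apply ht]
    exact hkey _ (ht.inter hA) Set.inter_subset_right
  have e1 : ∫ x in A, g x ∂ν = (∫⁻ x in A, ENNReal.ofReal (g x) ∂ν).toReal := by
    rw [integral_eq_lintegral_of_nonneg_ae
      (Filter.Eventually.of_forall fun x => hg0 x) hgc.aestronglyMeasurable.restrict]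
  have e3 : ∫⁻ x in A, ENNReal.ofReal (g x) ∂volume
      = ENNReal.ofReal (∫ x in A, g x ∂volume) :=
    (ofReal_integral_eq_lintegral_ofReal hIA_vol
      (Filter.Eventually.of_forall fun x => hg0 x)).symm
  have e2 : ∫⁻ x in A, ENNReal.ofReal (g x) ∂ν
      ≤ ENNReal.ofReal C * ENNReal.ofReal (∫ x in A, g x ∂volume) := by
    calc ∫⁻ x in A, ENNReal.ofReal (g x) ∂ν
        ≤ ∫⁻ x, ENNReal.ofReal (g x) ∂((ENNReal.ofReal C) • volume.restrict A) :=
          lintegral_mono' hrle le_rfl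
      _ = ENNReal.ofReal C * ∫⁻ x in A, ENNReal.ofReal (g x) ∂volume := by
          rw [lintegral_smul_measure, smul_eq_mul]
      _ = _ := by rw [e3]
  have hAbound : ∫ x in A, g x ∂ν ≤ C * ∫ x in A, g x ∂volume := by
    rw [e1]
    calc (∫⁻ x in A, ENNReal.ofReal (g x) ∂ν).toReal
        ≤ (ENNReal.ofReal C * ENNReal.ofReal (∫ x in A, g x ∂volume)).toReal := by
          apply ENNReal.toReal_mono _ e2
          exact ENNReal.mul_ne_top ENNReal.ofReal_ne_top ENNReal.ofReal_ne_top
      _ = C * ∫ x in A, g x ∂volume := by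
          rw [ENNReal.toReal_mul, ENNReal.toReal_ofReal hC,
            ENNReal.toReal_ofReal hInonneg]
  -- evaluate the volume integral
  have hval : ∫ x in A, g x ∂volume
      = 2 * ((1/k) * (Real.log (2/(1+Real.exp (-(k*δ₀)))) + 1/2
          - 1/(1+Real.exp (-(k*δ₀))))) := by
    rw [hAdef, hg]
    rw [sym_integral k δ₀ hk hδ₀, integral_eval k δ₀ hk hδ₀]
  have hfinal : C * ∫ x in A, g x ∂volume
      = (2 * C / k) * (Real.log (2 / (1 + Real.exp (-(k * δ₀)))) + 1 / 2
          - 1 / (1 + Real.exp (-(k * δ₀)))) := by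
    rw [hval]; field_simp
  linarith [hAbound, hcompl, hfinal]
end
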